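/- For every p ≥ 1 and ε > 0, the function φ : ℝ^{N×n} → ℝ defined by φ(ξ) = |ξ|^p/p − (ε/p)·log(ε + |ξ|^p) is convex, where |·| is the Frobenius norm. -/

import Mathlib

open Real Set

section aux

variable {p ε : ℝ}

private lemma aux_hasDerivAt (hp : 1 ≤ p) (hε : 0 < ε) {t : ℝ} (ht : 0 ≤ t) :
    HasDerivAt (fun t : ℝ => t ^ p / p - (ε / p) * Real.log (ε + t ^ p))
      (t ^ (p - 1) - (ε / p) * (p * t ^ (p - 1) / (ε + t ^ p))) t := by
  have hp0 : (0:ℝ) < p := lt_of_lt_of_le one_pos hp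
  have hpow : HasDerivAt (fun t : ℝ => t ^ p) (p * t ^ (p - 1)) t :=
    Real.hasDerivAt_rpow_const (Or.inr hp)
  have hne : ε + t ^ p ≠ 0 := by positivity
  have hlog : HasDerivAt (fun t : ℝ => Real.log (ε + t ^ p))
      (p * t ^ (p - 1) / (ε + t ^ p)) t := by
    have := ((hasDerivAt_const t ε).add hpow).log hne
    simpa using this
  have := (hpow.div_const p).sub (hlog.const_mul (ε / p))
  rw [mul_div_cancel_left₀ _ hp0.ne'] at this
  exact this

private lemma aux_deriv_eq (hp : 1 ≤ p) (hε : 0 < ε) {t : ℝ} (ht : 0 < t) :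
    deriv (fun t : ℝ => t ^ p / p - (ε / p) * Real.log (ε + t ^ p)) t
      = t ^ (2 * p - 1) / (ε + t ^ p) := by
  have hp0 : (0:ℝ) < p := lt_of_lt_of_le one_pos hp
  rw [(aux_hasDerivAt hp hε ht.le).deriv]
  have h1 : (0:ℝ) < ε + t ^ p := by positivity
  have h2 : t ^ (2 * p - 1) = t ^ (p - 1) * t ^ p := by
    rw [← Real.rpow_add ht]; ring_nf
  rw [h2]
  field_simp
  ring

end aux

/-- convexity of ξ ↦ |ξ|^p/p − (ε/p)·log(ε + |ξ|^p) on matrices with the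
Frobenius norm (modeled as `EuclideanSpace ℝ (Fin N × Fin n)`). -/
theorem stmt1 (N n : ℕ) (p ε : ℝ) (hp : 1 ≤ p) (hε : 0 < ε) :
    ConvexOn ℝ Set.univ
      (fun ξ : EuclideanSpace ℝ (Fin N × Fin n) =>
        ‖ξ‖ ^ p / p - (ε / p) * Real.log (ε + ‖ξ‖ ^ p)) := by
  have hp0 : (0:ℝ) < p := lt_of_lt_of_le one_pos hp
  set g : ℝ → ℝ := fun t => t ^ p / p - (ε / p) * Real.log (ε + t ^ p) with hg
  -- continuity on Ici 0
  have hcont : ContinuousOn g (Ici 0) := fun t ht =>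
    ((aux_hasDerivAt hp hε ht).continuousAt).continuousWithinAt
  have hdiff : DifferentiableOn ℝ g (interior (Ici 0)) := fun t ht => by
    rw [interior_Ici] at ht
    exact ((aux_hasDerivAt hp hε (le_of_lt ht)).differentiableAt).differentiableWithinAt
  -- monotonicity of the derivative on Ioi 0
  have hmono : MonotoneOn (deriv g) (interior (Ici 0)) := by
    rw [interior_Ici]
    intro a ha b hb hab
    rw [mem_Ioi] at ha hb
    rw [aux_deriv_eq hp hε ha, aux_deriv_eq hp hε hb]
    have hA : (0:ℝ) < ε + a ^ p := by positivity
    have hB : (0:ℝ) < ε + b ^ p := by positivity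
    rw [div_le_div_iff₀ hA hB]
    have e1 : a ^ (2 * p - 1) = a ^ p * a ^ (p - 1) := by
      rw [← Real.rpow_add ha]; ring_nf
    have e2 : b ^ (2 * p - 1) = b ^ p * b ^ (p - 1) := by
      rw [← Real.rpow_add hb]; ring_nf
    have h1 : a ^ p ≤ b ^ p := Real.rpow_le_rpow ha.le hab hp0.le
    have h2 : a ^ (p - 1) ≤ b ^ (p - 1) :=
      Real.rpow_le_rpow ha.le hab (by linarith)
    have h3 : (0:ℝ) ≤ a ^ p := by positivity
    have h4 : (0:ℝ) ≤ a ^ (p - 1) := by positivity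
    have h5 : (0:ℝ) ≤ b ^ p := by positivity
    have h6 : (0:ℝ) ≤ b ^ (p - 1) := by positivity
    rw [e1, e2]
    nlinarith [mul_nonneg h3 h5, mul_le_mul h1 h2 h4 h5]
  have hgconv : ConvexOn ℝ (Ici 0) g :=
    hmono.convexOn_of_deriv (convex_Ici 0) hcont hdiff
  have hgmono : MonotoneOn g (Ici 0) := by
    apply monotoneOn_of_deriv_nonneg (convex_Ici 0) hcont hdiff
    intro t ht
    rw [interior_Ici, mem_Ioi] at ht
    rw [aux_deriv_eq hp hε ht]
    positivity
  -- compose with the norm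
  refine ⟨convex_univ, ?_⟩
  intro x _ y _ a b ha hb hab
  have hnx : (0:ℝ) ≤ ‖x‖ := norm_nonneg x
  have hny : (0:ℝ) ≤ ‖y‖ := norm_nonneg y
  have key : ‖a • x + b • y‖ ≤ a * ‖x‖ + b * ‖y‖ := by
    calc ‖a • x + b • y‖ ≤ ‖a • x‖ + ‖b • y‖ := norm_add_le _ _
    _ = a * ‖x‖ + b * ‖y‖ := by
        rw [norm_smul, norm_smul, Real.norm_of_nonneg ha, Real.norm_of_nonneg hb]
  have hmem : a * ‖x‖ + b * ‖y‖ ∈ Ici (0:ℝ) := mem_Ici.mpr (by positivity)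
  calc g ‖a • x + b • y‖ ≤ g (a * ‖x‖ + b * ‖y‖) :=
        hgmono (mem_Ici.mpr (norm_nonneg _)) hmem key
  _ ≤ a * g ‖x‖ + b * g ‖y‖ :=
        hgconv.2 (mem_Ici.mpr hnx) (mem_Ici.mpr hny) ha hb hab
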